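/- Let κ₊(s) = max{κ(s),0} and p₊ solve p₊'' + κ₊ p₊ = 0 with p₊(0)=0, p₊'(0)=1. If ∫₀^λ s κ₊(s) ds ≤ 1, then p₊'(ρ) > 0 for all ρ ∈ [0,λ], hence μ₀(λ) := min_{[0,λ]} p₊' satisfies 0 < μ₀(λ) ≤ 1 and μ₀(λ) ρ ≤ p₊(ρ) ≤ ρ on [0,λ]. -/

import Mathlib

open Set intervalIntegral

/-- if `p₊` solves `p₊'' + κ₊ p₊ = 0` (`κ₊ = max κ 0`) with `p₊ 0 = 0`,
`p₊' 0 = 1`, and `∫₀^λ s κ₊(s) ds ≤ 1`, then `p₊' > 0` on `[0,λ]`, hence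
`μ₀(λ) = inf_{[0,λ]} p₊'` satisfies `0 < μ₀(λ) ≤ 1` and `μ₀(λ) ρ ≤ p₊(ρ) ≤ ρ` on `[0,λ]`. -/
theorem stmt_4 (κ p : ℝ → ℝ) (hκ : Continuous κ) (hp : ContDiff ℝ 2 p)
    (hode : ∀ t > (0:ℝ), deriv (deriv p) t + max (κ t) 0 * p t = 0)
    (hp0 : p 0 = 0) (hp'0 : deriv p 0 = 1) (lam : ℝ) (hlam : 0 < lam)
    (hμ : (∫ s in (0:ℝ)..lam, s * max (κ s) 0) ≤ 1) :
    (∀ ρ ∈ Set.Icc (0:ℝ) lam, 0 < deriv p ρ) ∧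
      0 < sInf (deriv p '' Set.Icc (0:ℝ) lam) ∧
      sInf (deriv p '' Set.Icc (0:ℝ) lam) ≤ 1 ∧
      ∀ ρ ∈ Set.Icc (0:ℝ) lam,
        sInf (deriv p '' Set.Icc (0:ℝ) lam) * ρ ≤ p ρ ∧ p ρ ≤ ρ := by
  set K : ℝ → ℝ := fun s => max (κ s) 0 with hKdef
  have hKc : Continuous K := hκ.max continuous_const
  have hKnn : ∀ s, 0 ≤ K s := fun s => le_max_right _ _
  set q : ℝ → ℝ := deriv p with hqdef
  have hcontsK : Continuous fun s : ℝ => s * max (κ s) 0 := continuous_id.mul (hκ.max continuous_const)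
  have hpd : Differentiable ℝ p := hp.differentiable (by norm_num)
  have hpc : Continuous p := hpd.continuous
  have hqc1 : ContDiff ℝ 1 q := by
    have h2 : ContDiff ℝ ((1:ℕ) + 1) p := by exact_mod_cast hp
    exact (contDiff_succ_iff_deriv.mp h2).2.2
  have hqd : Differentiable ℝ q := hqc1.differentiable one_ne_zero
  have hqcont : Continuous q := hqd.continuous
  have hq'c : Continuous (deriv q) := (contDiff_one_iff_deriv.mp hqc1).2
  -- the ODE holds on [0,∞)
  have hode' : ∀ t ∈ Set.Ici (0:ℝ), deriv q t = -(K t * p t) := by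
    have h1 : Set.EqOn (deriv q) (fun t => -(K t * p t)) (Set.Ioi 0) := by
      intro t ht
      have := hode t ht
      simp only [hKdef]
      linarith
    have h2 := h1.closure hq'c ((hKc.mul hpc).neg)
    rwa [closure_Ioi] at h2
  -- FTC for p
  have hFTCp : ∀ t : ℝ, p t = ∫ s in (0:ℝ)..t, q s := by
    intro t
    have := integral_deriv_eq_sub (f := p) (a := 0) (b := t)
      (fun x _ => hpd x) (hqcont.intervalIntegrable 0 t)
    rw [hp0, sub_zero] at this
    exact this.symm
  -- key lemma: if q ≥ 0 on [0,b] then p ≥ 0, q ≤ 1, p ≤ id there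
  have key : ∀ b : ℝ, 0 ≤ b → (∀ t ∈ Set.Icc (0:ℝ) b, 0 ≤ q t) →
      ∀ t ∈ Set.Icc (0:ℝ) b, 0 ≤ p t ∧ q t ≤ 1 ∧ p t ≤ t := by
    intro b hb hqnn
    have hpmono : MonotoneOn p (Set.Icc 0 b) := by
      apply monotoneOn_of_deriv_nonneg (convex_Icc 0 b) hpc.continuousOn
        hpd.differentiableOn
      intro x hx
      rw [interior_Icc] at hx
      exact hqnn x ⟨hx.1.le, hx.2.le⟩
    have hpnn : ∀ t ∈ Set.Icc (0:ℝ) b, 0 ≤ p t := by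
      intro t ht
      have := hpmono ⟨le_rfl, hb⟩ ht ht.1
      rwa [hp0] at this
    have hqanti : AntitoneOn q (Set.Icc 0 b) := by
      apply antitoneOn_of_deriv_nonpos (convex_Icc 0 b) hqcont.continuousOn
        hqd.differentiableOn
      intro x hx
      rw [interior_Icc] at hx
      rw [hode' x (le_of_lt hx.1)]
      have := mul_nonneg (hKnn x) (hpnn x ⟨hx.1.le, hx.2.le⟩)
      linarith
    have hqle1 : ∀ t ∈ Set.Icc (0:ℝ) b, q t ≤ 1 := by
      intro t ht
      have := hqanti ⟨le_rfl, hb⟩ ht ht.1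
      rwa [hp'0] at this
    intro t ht
    refine ⟨hpnn t ht, hqle1 t ht, ?_⟩
    rw [hFTCp t]
    calc (∫ s in (0:ℝ)..t, q s) ≤ ∫ s in (0:ℝ)..t, (1:ℝ) := by
          apply integral_mono_on ht.1 (hqcont.intervalIntegrable 0 t)
            (intervalIntegrable_const)
          intro x hx
          exact hqle1 x ⟨hx.1, hx.2.trans ht.2⟩
      _ = t := by simp
  -- main positivity claim
  have hqpos : ∀ t ∈ Set.Icc (0:ℝ) lam, 0 < q t := by
    by_contra hcon
    push_neg at hcon
    obtain ⟨t₀, ht₀, hqt₀⟩ := hcon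
    set S : Set ℝ := {t ∈ Set.Icc (0:ℝ) lam | q t ≤ 0} with hSdef
    have hSne : S.Nonempty := ⟨t₀, ht₀, hqt₀⟩
    have hSclosed : IsClosed S := by
      have : S = Set.Icc (0:ℝ) lam ∩ q ⁻¹' Set.Iic 0 := by
        ext x; simp [hSdef, Set.mem_setOf_eq, and_comm]
      rw [this]
      exact isClosed_Icc.inter (isClosed_Iic.preimage hqcont)
    have hSbdd : BddBelow S := ⟨0, fun x hx => hx.1.1⟩
    set ρ := sInf S with hρdef
    have hρS : ρ ∈ S := hSclosed.csInf_mem hSne hSbdd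
    have hρmem : ρ ∈ Set.Icc (0:ℝ) lam := hρS.1
    have hρpos : 0 < ρ := by
      rcases lt_or_eq_of_le hρmem.1 with h | h
      · exact h
      · exfalso
        have h2 : q ρ ≤ 0 := hρS.2
        rw [← h, hp'0] at h2; linarith
    have hlt : ∀ t, 0 ≤ t → t < ρ → 0 < q t := by
      intro t h1 h2
      by_contra h
      push_neg at h
      have : t ∈ S := ⟨⟨h1, h2.le.trans hρmem.2⟩, h⟩
      exact absurd (csInf_le hSbdd this) (not_le.mpr h2)
    have hqρ : q ρ = 0 := by
      refine le_antisymm hρS.2 ?_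
      have htend : Filter.Tendsto q (nhdsWithin ρ (Set.Iio ρ)) (nhds (q ρ)) :=
        (hqcont.continuousAt.tendsto).mono_left nhdsWithin_le_nhds
      refine ge_of_tendsto htend ?_
      filter_upwards [Ioo_mem_nhdsLT_of_mem (show ρ ∈ Set.Ioc (0:ℝ) ρ from ⟨hρpos, le_rfl⟩)]
        with x hx
      exact (hlt x hx.1.le hx.2).le
    have hqnnρ : ∀ t ∈ Set.Icc (0:ℝ) ρ, 0 ≤ q t := by
      intro t ht
      rcases lt_or_eq_of_le ht.2 with h | h
      · exact (hlt t ht.1 h).le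
      · rw [h, hqρ]
    have hkey := key ρ hρpos.le hqnnρ
    -- ∫₀^ρ K p = 1
    have hint1 : (∫ s in (0:ℝ)..ρ, K s * p s) = 1 := by
      have hd : ∫ s in (0:ℝ)..ρ, deriv q s = q ρ - q 0 :=
        integral_deriv_eq_sub (fun x _ => hqd x) (hq'c.intervalIntegrable 0 ρ)
      have hcongr : (∫ s in (0:ℝ)..ρ, deriv q s) = ∫ s in (0:ℝ)..ρ, -(K s * p s) := by
        apply integral_congr
        intro x hx
        rw [Set.uIcc_of_le hρpos.le] at hx
        exact hode' x hx.1
      rw [hcongr, intervalIntegral.integral_neg, hqρ, hp'0] at hd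
      linarith
    -- ∫₀^ρ s K s ≤ 1
    have hsplit : (∫ s in (0:ℝ)..ρ, s * K s) + (∫ s in ρ..lam, s * K s)
        = ∫ s in (0:ℝ)..lam, s * K s :=
      integral_add_adjacent_intervals (hcontsK.intervalIntegrable 0 ρ)
        (hcontsK.intervalIntegrable ρ lam)
    have htail : 0 ≤ ∫ s in ρ..lam, s * K s := by
      apply integral_nonneg hρmem.2
      intro u hu
      exact mul_nonneg (hρpos.le.trans hu.1) (hKnn u)
    have hint2 : (∫ s in (0:ℝ)..ρ, s * K s) ≤ 1 := by
      have := hsplit ▸ hμ; linarith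
    -- hence ∫₀^ρ K(s)(s - p s) ≤ 0, with nonneg continuous integrand
    set f : ℝ → ℝ := fun s => K s * (s - p s) with hfdef
    have hfc : Continuous f := hKc.mul (continuous_id.sub hpc)
    have hfnn : ∀ s ∈ Set.Icc (0:ℝ) ρ, 0 ≤ f s := by
      intro s hs
      exact mul_nonneg (hKnn s) (sub_nonneg.mpr (hkey s hs).2.2)
    have hfint : (∫ s in (0:ℝ)..ρ, f s) ≤ 0 := by
      have : (∫ s in (0:ℝ)..ρ, f s)
          = (∫ s in (0:ℝ)..ρ, s * K s) - ∫ s in (0:ℝ)..ρ, K s * p s := by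
        rw [← intervalIntegral.integral_sub (f := fun s => s * K s) (g := fun s => K s * p s) (hcontsK.intervalIntegrable 0 ρ)
          ((hKc.mul hpc).intervalIntegrable 0 ρ)]
        apply integral_congr
        intro x _
        simp [hfdef]; ring
      rw [this, hint1]; linarith
    -- there exists s₁ with K s₁ * p s₁ > 0
    have hex : ∃ s₁ ∈ Set.Icc (0:ℝ) ρ, 0 < K s₁ * p s₁ := by
      by_contra h
      push_neg at h
      have : (∫ s in (0:ℝ)..ρ, K s * p s) ≤ ∫ s in (0:ℝ)..ρ, (0:ℝ) :=
        integral_mono_on hρpos.le ((hKc.mul hpc).intervalIntegrable 0 ρ)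
          intervalIntegrable_const h
      simp at this
      linarith [hint1 ▸ this]
    obtain ⟨s₁, hs₁mem, hs₁pos⟩ := hex
    have hKs₁ : 0 < K s₁ := by
      rcases lt_or_ge 0 (K s₁) with h | h
      · exact h
      · exfalso
        have hps₁ := (hkey s₁ hs₁mem).1
        nlinarith
    have hps₁pos : 0 < p s₁ := by nlinarith [hKs₁]
    have hs₁pos' : 0 < s₁ := by
      rcases lt_or_eq_of_le hs₁mem.1 with h | h
      · exact h
      · exfalso; rw [← h, hp0] at hps₁pos; linarith
    -- f s₁ = 0
    have hfs₁ : f s₁ = 0 := by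
      by_contra h
      have hfs₁pos : 0 < f s₁ := lt_of_le_of_ne (hfnn s₁ hs₁mem) (Ne.symm h)
      have hev : ∀ᶠ x in nhds s₁, 0 < f x :=
        hfc.continuousAt.eventually (eventually_gt_nhds hfs₁pos)
      obtain ⟨ε, hε, hball⟩ := Metric.eventually_nhds_iff.mp hev
      set a : ℝ := max (s₁ - ε / 2) (s₁ / 2) with hadef
      have ha0 : 0 < a := lt_of_lt_of_le (half_pos hs₁pos') (le_max_right _ _)
      have has₁ : a < s₁ := by
        apply max_lt <;> [linarith; linarith]
      have haρ : a ≤ ρ := has₁.le.trans hs₁mem.2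
      have hI1 : 0 ≤ ∫ s in (0:ℝ)..a, f s := by
        apply integral_nonneg ha0.le
        intro u hu
        exact hfnn u ⟨hu.1, hu.2.trans haρ⟩
      have hI2 : 0 < ∫ s in a..s₁, f s := by
        apply intervalIntegral_pos_of_pos_on (hfc.intervalIntegrable a s₁) _ has₁
        intro x hx
        apply hball
        rw [Real.dist_eq, abs_lt]
        constructor
        · have : s₁ - ε / 2 ≤ a := le_max_left _ _
          linarith [hx.1]
        · linarith [hx.2]
      have hI3 : 0 ≤ ∫ s in s₁..ρ, f s := by
        apply integral_nonneg hs₁mem.2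
        intro u hu
        exact hfnn u ⟨hs₁pos'.le.trans hu.1, hu.2⟩
      have hadd1 : (∫ s in (0:ℝ)..a, f s) + (∫ s in a..s₁, f s) = ∫ s in (0:ℝ)..s₁, f s :=
        integral_add_adjacent_intervals (hfc.intervalIntegrable 0 a)
          (hfc.intervalIntegrable a s₁)
      have hadd2 : (∫ s in (0:ℝ)..s₁, f s) + (∫ s in s₁..ρ, f s) = ∫ s in (0:ℝ)..ρ, f s :=
        integral_add_adjacent_intervals (hfc.intervalIntegrable 0 s₁)
          (hfc.intervalIntegrable s₁ ρ)
      linarith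
    have hps₁ : p s₁ = s₁ := by
      have : s₁ - p s₁ = 0 := by
        rcases mul_eq_zero.mp hfs₁ with h | h
        · exfalso; linarith [hKs₁]
        · exact h
      linarith
    -- g = id - p is monotone on [0, ρ], vanishes at 0 and s₁, hence p = id on [0, s₁]
    have hgmono : MonotoneOn (fun t => t - p t) (Set.Icc 0 ρ) := by
      have hgc : Continuous fun t : ℝ => t - p t := continuous_id.sub hpc
      have hgd : Differentiable ℝ fun t : ℝ => t - p t := differentiable_id.sub hpd
      apply monotoneOn_of_deriv_nonneg (convex_Icc 0 ρ) hgc.continuousOn hgd.differentiableOn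
      intro x hx
      rw [interior_Icc] at hx
      have hder : deriv (fun t => t - p t) x = 1 - q x := by
        rw [deriv_fun_sub differentiableAt_fun_id (hpd x), deriv_id'']
      rw [hder]
      have := (hkey x ⟨hx.1.le, hx.2.le⟩).2.1
      linarith
    have hpid : ∀ t ∈ Set.Icc (0:ℝ) s₁, p t = t := by
      intro t ht
      have h1 : (0:ℝ) - p 0 ≤ t - p t :=
        hgmono ⟨le_rfl, hρpos.le⟩ ⟨ht.1, ht.2.trans hs₁mem.2⟩ ht.1
      have h2 : t - p t ≤ s₁ - p s₁ :=
        hgmono ⟨ht.1, ht.2.trans hs₁mem.2⟩ hs₁mem ht.2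
      rw [hp0, sub_zero] at h1
      rw [hps₁, sub_self] at h2
      linarith
    -- pick t₁ < s₁ close to s₁ with K t₁ > 0
    have hevK : ∀ᶠ x in nhds s₁, 0 < K x :=
      hKc.continuousAt.eventually (eventually_gt_nhds hKs₁)
    obtain ⟨ε, hε, hball⟩ := Metric.eventually_nhds_iff.mp hevK
    set t₁ : ℝ := max (s₁ - ε / 2) (s₁ / 2) with ht₁def
    have ht₁0 : 0 < t₁ := lt_of_lt_of_le (half_pos hs₁pos') (le_max_right _ _)
    have ht₁s₁ : t₁ < s₁ := by apply max_lt <;> [linarith; linarith]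
    have hKt₁ : 0 < K t₁ := by
      apply hball
      rw [Real.dist_eq, abs_lt]
      have : s₁ - ε / 2 ≤ t₁ := le_max_left _ _
      constructor <;> linarith
    have hIoo : Set.Ioo (0:ℝ) s₁ ∈ nhds t₁ := Ioo_mem_nhds ht₁0 ht₁s₁
    -- q = 1 on Ioo 0 s₁
    have hq1 : ∀ x ∈ Set.Ioo (0:ℝ) s₁, q x = 1 := by
      intro x hx
      have hev : p =ᶠ[nhds x] id := by
        filter_upwards [Ioo_mem_nhds hx.1 hx.2] with y hy
        exact hpid y ⟨hy.1.le, hy.2.le⟩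
      have := hev.deriv_eq
      rw [deriv_id] at this
      exact this
    have hqev : q =ᶠ[nhds t₁] (fun _ => 1) := by
      filter_upwards [hIoo] with y hy
      exact hq1 y hy
    have hderq0 : deriv q t₁ = 0 := by
      rw [hqev.deriv_eq]; exact deriv_const _ _
    have hderqneg : deriv q t₁ = -(K t₁ * p t₁) := hode' t₁ ht₁0.le
    have hpt₁ : p t₁ = t₁ := hpid t₁ ⟨ht₁0.le, ht₁s₁.le⟩
    rw [hderq0, hpt₁] at hderqneg
    nlinarith
  -- conclusions
  have h0mem : (0:ℝ) ∈ Set.Icc (0:ℝ) lam := ⟨le_rfl, hlam.le⟩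
  have hcomp : IsCompact (q '' Set.Icc (0:ℝ) lam) := (isCompact_Icc.image hqcont)
  have hne : (q '' Set.Icc (0:ℝ) lam).Nonempty := ⟨q 0, 0, h0mem, rfl⟩
  have hbdd : BddBelow (q '' Set.Icc (0:ℝ) lam) := hcomp.bddBelow
  set μ := sInf (q '' Set.Icc (0:ℝ) lam) with hμdef
  have hμmem : μ ∈ q '' Set.Icc (0:ℝ) lam := hcomp.sInf_mem hne
  obtain ⟨c, hc, hcμ⟩ := hμmem
  have hμpos : 0 < μ := hcμ ▸ hqpos c hc
  have hμle1 : μ ≤ 1 := by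
    have : μ ≤ q 0 := csInf_le hbdd ⟨0, h0mem, rfl⟩
    rwa [hp'0] at this
  have hkeylam := key lam hlam.le (fun t ht => (hqpos t ht).le)
  refine ⟨hqpos, hμpos, hμle1, ?_⟩
  intro ρ hρ
  refine ⟨?_, (hkeylam ρ hρ).2.2⟩
  rw [hFTCp ρ]
  calc μ * ρ = ∫ s in (0:ℝ)..ρ, μ := by rw [intervalIntegral.integral_const]; simp [mul_comm]
    _ ≤ ∫ s in (0:ℝ)..ρ, q s := by
        apply integral_mono_on hρ.1 intervalIntegrable_const (hqcont.intervalIntegrable 0 ρ)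
        intro x hx
        exact csInf_le hbdd ⟨x, ⟨hx.1, hx.2.trans hρ.2⟩, rfl⟩
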